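/- For x_ξ ∈ Σ₀ and θ ∈ ℝ set μ_ξ(θ) := det(Id_{H_ξ} + θQ_ξ), where H_ξ := {v ∈ ℝ^d : ⟨v, N_ξ⟩ = 0}, P_ξ is the orthogonal projection onto H_ξ, and Q_ξ : H_ξ → H_ξ is v ↦ P_ξ(Hess ω(x_ξ) v). Then θ ↦ μ_ξ(θ) is a polynomial of degree at most d − 1 with μ_ξ(0) = 1, and there exist Θ₀ > 0 and C > 0 such that for every 0 < Θ ≤ Θ₀, every x_ξ ∈ Σ₀, every |θ| < θ_ξ, and every 0 ≤ p ≤ d − 1: μ_ξ(θ) ≥ C⁻¹ > 0 and |d^p μ_ξ/dθ^p (θ)| ≤ C⟨x_ξ⟩^{p(M_ω−2)}. -/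

import Mathlib

open Polynomial

lemma coeff_prod_linear_bound {ι : Type*} (K : ℝ) (hK : 0 ≤ K) (s : Finset ι)
    (f : ι → Polynomial ℝ)
    (h1 : ∀ i ∈ s, (f i).natDegree ≤ 1)
    (h0 : ∀ i ∈ s, |(f i).coeff 0| ≤ 1)
    (hc : ∀ i ∈ s, |(f i).coeff 1| ≤ K) :
    ∀ k, |(∏ i ∈ s, f i).coeff k| ≤ 2 ^ s.card * K ^ k := by
  classical
  induction s using Finset.induction with
  | empty =>
      intro k
      cases k with
      | zero => simp
      | succ k =>
          simp only [Finset.prod_empty, Polynomial.coeff_one, Finset.card_empty, pow_zero,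
            one_mul]
          rw [if_neg (by omega)]
          simpa using pow_nonneg hK (k + 1)
  | insert a t ha ih =>
      intro k
      have hfa := eq_X_add_C_of_natDegree_le_one (h1 a (Finset.mem_insert_self a t))
      have ihk := ih (fun i hi => h1 i (Finset.mem_insert_of_mem hi))
        (fun i hi => h0 i (Finset.mem_insert_of_mem hi))
        (fun i hi => hc i (Finset.mem_insert_of_mem hi))
      rw [Finset.prod_insert ha, Finset.card_insert_of_notMem ha]
      set q := ∏ i ∈ t, f i with hq
      have ha0 : |(f a).coeff 0| ≤ 1 := h0 a (Finset.mem_insert_self a t)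
      have ha1 : |(f a).coeff 1| ≤ K := hc a (Finset.mem_insert_self a t)
      rw [hfa]
      cases k with
      | zero =>
          have : ((C ((f a).coeff 1) * X + C ((f a).coeff 0)) * q).coeff 0
              = (f a).coeff 0 * q.coeff 0 := by
            rw [Polynomial.mul_coeff_zero, coeff_add, coeff_C, coeff_C_mul, coeff_X_zero]
            simp
          rw [this]
          calc |(f a).coeff 0 * q.coeff 0| ≤ 1 * (2 ^ t.card * K ^ 0) := by
                rw [abs_mul]; exact mul_le_mul ha0 (ihk 0) (abs_nonneg _) zero_le_one
            _ ≤ 2 ^ (t.card + 1) * K ^ 0 := by rw [pow_succ]; ring_nf; nlinarith [pow_pos (zero_lt_two (α := ℝ)) t.card]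
      | succ k =>
          have : ((C ((f a).coeff 1) * X + C ((f a).coeff 0)) * q).coeff (k + 1)
              = (f a).coeff 1 * q.coeff k + (f a).coeff 0 * q.coeff (k + 1) := by
            rw [add_mul, coeff_add, mul_assoc, coeff_C_mul, coeff_X_mul, coeff_C_mul]
          rw [this]
          have b1 : |(f a).coeff 1 * q.coeff k| ≤ K * (2 ^ t.card * K ^ k) := by
            rw [abs_mul]
            exact mul_le_mul ha1 (ihk k) (abs_nonneg _) hK
          have b2 : |(f a).coeff 0 * q.coeff (k + 1)| ≤ 1 * (2 ^ t.card * K ^ (k + 1)) := by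
            rw [abs_mul]
            exact mul_le_mul ha0 (ihk (k + 1)) (abs_nonneg _) zero_le_one
          calc |(f a).coeff 1 * q.coeff k + (f a).coeff 0 * q.coeff (k + 1)|
              ≤ |(f a).coeff 1 * q.coeff k| + |(f a).coeff 0 * q.coeff (k + 1)| := abs_add_le _ _
            _ ≤ K * (2 ^ t.card * K ^ k) + 1 * (2 ^ t.card * K ^ (k + 1)) := add_le_add b1 b2
            _ = 2 ^ (t.card + 1) * K ^ (k + 1) := by ring

set_option maxHeartbeats 1000000 in
set_option maxRecDepth 8000 in
lemma det_one_add_smul_poly {n : ℕ} (M : Matrix (Fin n) (Fin n) ℝ) (K : ℝ) (hK : 0 ≤ K)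
    (hM : ∀ i j, |M i j| ≤ K) :
    ∃ P : Polynomial ℝ,
      P.natDegree ≤ n ∧
      (∀ θ : ℝ, P.eval θ = Matrix.det (1 + θ • M)) ∧
      (∀ k, |P.coeff k| ≤ (n.factorial : ℝ) * 2 ^ n * K ^ k) := by
  classical
  obtain ⟨Mp, hMp⟩ : ∃ Mp : Matrix (Fin n) (Fin n) (Polynomial ℝ),
      Mp = 1 + (X : ℝ[X]) • M.map C := ⟨_, rfl⟩
  have hentry : ∀ i j, Mp i j = (if i = j then 1 else 0) + X * C (M i j) := by
    intro i j
    simp [hMp, Matrix.add_apply, Matrix.smul_apply, Matrix.one_apply, Matrix.map_apply,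
      smul_eq_mul]
  have hdeg1 : ∀ i j, (Mp i j).natDegree ≤ 1 := by
    intro i j
    rw [hentry]
    refine (natDegree_add_le _ _).trans ?_
    have h1 : ((if i = j then (1:ℝ[X]) else 0)).natDegree = 0 := by
      split <;> simp
    have h2 : ((X : ℝ[X]) * C (M i j)).natDegree ≤ 1 := by
      refine (natDegree_mul_le).trans ?_
      simp
    omega
  have hc0 : ∀ i j, |(Mp i j).coeff 0| ≤ 1 := by
    intro i j
    rw [hentry, coeff_add]
    have : ((X : ℝ[X]) * C (M i j)).coeff 0 = 0 := by
      rw [mul_comm, coeff_mul_X_zero]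
    rw [this, add_zero]
    split <;> simp
  have hc1 : ∀ i j, |(Mp i j).coeff 1| ≤ K := by
    intro i j
    rw [hentry, coeff_add]
    have : ((X : ℝ[X]) * C (M i j)).coeff 1 = M i j := by
      rw [mul_comm, coeff_mul_X, coeff_C_zero]
    rw [this]
    have : ((if i = j then (1:ℝ[X]) else 0)).coeff 1 = 0 := by
      split <;> simp [Polynomial.coeff_one]
    rw [this, zero_add]
    exact hM i j
  refine ⟨Mp.det, ?_, ?_, ?_⟩
  · rw [Matrix.det_apply']
    refine natDegree_sum_le_of_forall_le _ _ ?_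
    intro σ _
    refine (natDegree_mul_le).trans ?_
    rw [← Polynomial.C_eq_intCast, natDegree_C, zero_add]
    refine (natDegree_prod_le _ _).trans ?_
    calc ∑ i : Fin n, (Mp (σ i) i).natDegree ≤ ∑ _i : Fin n, 1 :=
          Finset.sum_le_sum (fun i _ => hdeg1 (σ i) i)
      _ = n := by simp
  · intro θ
    have hmap := RingHom.map_det (Polynomial.evalRingHom θ) Mp
    rw [RingHom.mapMatrix_apply] at hmap
    have h2 : Mp.map (Polynomial.eval θ) = 1 + θ • M := by
      ext i j
      rw [Matrix.map_apply, hentry, Matrix.add_apply, Matrix.smul_apply, Matrix.one_apply,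
        eval_add, eval_mul, eval_X, eval_C, apply_ite (Polynomial.eval θ), eval_one, eval_zero,
        smul_eq_mul, mul_comm θ]
    calc Polynomial.eval θ Mp.det = (Polynomial.evalRingHom θ) Mp.det := rfl
      _ = (Mp.map ⇑(Polynomial.evalRingHom θ)).det := hmap
      _ = (1 + θ • M).det := by
          rw [show (Mp.map ⇑(Polynomial.evalRingHom θ)) = Mp.map (Polynomial.eval θ) from rfl, h2]
  · intro k
    rw [Matrix.det_apply', Polynomial.finset_sum_coeff]
    calc |∑ σ : Equiv.Perm (Fin n), (((Equiv.Perm.sign σ : ℤ) : ℝ[X]) * ∏ i, Mp (σ i) i).coeff k|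
        ≤ ∑ σ : Equiv.Perm (Fin n), |(((Equiv.Perm.sign σ : ℤ) : ℝ[X]) * ∏ i, Mp (σ i) i).coeff k| :=
          Finset.abs_sum_le_sum_abs _ _
      _ ≤ ∑ _σ : Equiv.Perm (Fin n), 2 ^ n * K ^ k := by
          refine Finset.sum_le_sum ?_
          intro σ _
          have hprod := coeff_prod_linear_bound K hK Finset.univ (fun i => Mp (σ i) i)
            (fun i _ => hdeg1 (σ i) i) (fun i _ => hc0 (σ i) i) (fun i _ => hc1 (σ i) i) k
          have habs : |(((Equiv.Perm.sign σ : ℤ) : ℝ[X]) * ∏ i, Mp (σ i) i).coeff k|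
              = |(∏ i, Mp (σ i) i).coeff k| := by
            rcases Int.units_eq_one_or (Equiv.Perm.sign σ) with h | h <;> rw [h] <;> norm_num
          rw [habs]
          simpa using hprod
      _ = (n.factorial : ℝ) * 2 ^ n * K ^ k := by
          rw [Finset.sum_const, Finset.card_univ, Fintype.card_perm, Fintype.card_fin,
            nsmul_eq_mul, mul_assoc]

lemma poly_iteratedDeriv_eval (P : Polynomial ℝ) (p : ℕ) :
    iteratedDeriv p (fun x => P.eval x) = fun x => (Polynomial.derivative^[p] P).eval x := by
  induction p with
  | zero => simp [iteratedDeriv_zero]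
  | succ p ih =>
      rw [iteratedDeriv_succ, ih, Function.iterate_succ_apply']
      funext x
      exact Polynomial.deriv _

lemma poly_eval_sub_coeff_zero (n : ℕ) (P : Polynomial ℝ) (hdeg : P.natDegree ≤ n)
    (A K : ℝ) (hA : 0 ≤ A) (hK : 0 ≤ K)
    (hcoeff : ∀ k, |P.coeff k| ≤ A * K ^ k) (θ : ℝ) (hθ : |θ| * K ≤ 1) :
    |P.eval θ - P.coeff 0| ≤ A * n * (|θ| * K) := by
  have h0 : 0 ≤ |θ| * K := mul_nonneg (abs_nonneg _) hK
  rw [Polynomial.eval_eq_sum_range' (Nat.lt_succ_of_le hdeg), Finset.sum_range_succ']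
  simp only [pow_zero, mul_one, add_sub_cancel_right]
  calc |∑ i ∈ Finset.range n, P.coeff (i + 1) * θ ^ (i + 1)|
      ≤ ∑ i ∈ Finset.range n, |P.coeff (i + 1) * θ ^ (i + 1)| := Finset.abs_sum_le_sum_abs _ _
    _ ≤ ∑ _i ∈ Finset.range n, A * (|θ| * K) := by
        refine Finset.sum_le_sum ?_
        intro i _
        rw [abs_mul, abs_pow]
        calc |P.coeff (i + 1)| * |θ| ^ (i + 1)
            ≤ (A * K ^ (i + 1)) * |θ| ^ (i + 1) :=
              mul_le_mul_of_nonneg_right (hcoeff _) (pow_nonneg (abs_nonneg _) _)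
          _ = A * (|θ| * K) ^ (i + 1) := by ring
          _ ≤ A * (|θ| * K) ^ 1 := by
              refine mul_le_mul_of_nonneg_left ?_ hA
              exact pow_le_pow_of_le_one h0 hθ (by omega)
          _ = A * (|θ| * K) := by ring
    _ = A * n * (|θ| * K) := by
        rw [Finset.sum_const, Finset.card_range, nsmul_eq_mul]; ring

lemma poly_deriv_bound (n : ℕ) (P : Polynomial ℝ) (hdeg : P.natDegree ≤ n)
    (A K : ℝ) (hA : 0 ≤ A) (hK : 0 ≤ K)
    (hcoeff : ∀ k, |P.coeff k| ≤ A * K ^ k)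
    (p : ℕ) (hp : p ≤ n) (θ : ℝ) (hθ : |θ| * K ≤ 1) :
    |iteratedDeriv p (fun x => P.eval x) θ|
      ≤ ((2 * n + 1) ^ (2 * n + 1) : ℕ) * (n + 1) * A * K ^ p := by
  have h0 : 0 ≤ |θ| * K := mul_nonneg (abs_nonneg _) hK
  rw [poly_iteratedDeriv_eval]
  show |Polynomial.eval θ (Polynomial.derivative^[p] P)| ≤ _
  set Q := Polynomial.derivative^[p] P with hQ
  have hQdeg : Q.natDegree ≤ n := le_trans (Polynomial.natDegree_iterate_derivative P p)
    (by omega)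
  have hQcoeff : ∀ j, j ≤ n → |Q.coeff j| ≤ ((2 * n + 1) ^ (2 * n + 1) : ℕ) * (A * K ^ (j + p)) := by
    intro j hjn
    rw [hQ, Polynomial.coeff_iterate_derivative, nsmul_eq_mul, abs_mul, Nat.abs_cast]
    have hd : ((j + p).descFactorial p : ℝ) ≤ ((2 * n + 1) ^ (2 * n + 1) : ℕ) := by
      have h1 : (j + p).descFactorial p ≤ (j + p) ^ p := Nat.descFactorial_le_pow _ _
      have h2 : (j + p) ^ p ≤ (2 * n + 1) ^ (2 * n + 1) := by
        calc (j + p) ^ p ≤ (2 * n + 1) ^ p := Nat.pow_le_pow_left (by omega) p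
          _ ≤ (2 * n + 1) ^ (2 * n + 1) := Nat.pow_le_pow_right (by omega) (by omega)
      exact_mod_cast le_trans h1 h2
    exact mul_le_mul hd (hcoeff _) (abs_nonneg _) (by positivity)
  rw [Polynomial.eval_eq_sum_range' (Nat.lt_succ_of_le hQdeg)]
  calc |∑ j ∈ Finset.range (n + 1), Q.coeff j * θ ^ j|
      ≤ ∑ j ∈ Finset.range (n + 1), |Q.coeff j * θ ^ j| := Finset.abs_sum_le_sum_abs _ _
    _ ≤ ∑ _j ∈ Finset.range (n + 1), ((2 * n + 1) ^ (2 * n + 1) : ℕ) * A * K ^ p := by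
        refine Finset.sum_le_sum ?_
        intro j hj
        rw [abs_mul, abs_pow]
        calc |Q.coeff j| * |θ| ^ j
            ≤ (((2 * n + 1) ^ (2 * n + 1) : ℕ) * (A * K ^ (j + p))) * |θ| ^ j :=
              mul_le_mul_of_nonneg_right (hQcoeff j (by
                have := Finset.mem_range.mp hj; omega)) (pow_nonneg (abs_nonneg _) _)
          _ = ((2 * n + 1) ^ (2 * n + 1) : ℕ) * A * K ^ p * (|θ| * K) ^ j := by ring
          _ ≤ ((2 * n + 1) ^ (2 * n + 1) : ℕ) * A * K ^ p * 1 := by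
              refine mul_le_mul_of_nonneg_left ?_ (by positivity)
              exact pow_le_one₀ h0 hθ
          _ = ((2 * n + 1) ^ (2 * n + 1) : ℕ) * A * K ^ p := by ring
    _ = ((2 * n + 1) ^ (2 * n + 1) : ℕ) * (n + 1) * A * K ^ p := by
        rw [Finset.sum_const, Finset.card_range, nsmul_eq_mul]; push_cast; ring

lemma hess_norm_le_aux {E : Type*} [NormedAddCommGroup E] [InnerProductSpace ℝ E]
    [CompleteSpace E] (f : E → ℝ) (x : E) :
    ‖fderiv ℝ (gradient f) x‖ ≤ ‖iteratedFDeriv ℝ 2 f x‖ := by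
  have hcomp : gradient f = (⇑(InnerProductSpace.toDual ℝ E).symm) ∘ (fderiv ℝ f) := rfl
  rw [hcomp, LinearIsometryEquiv.comp_fderiv]
  refine le_trans (ContinuousLinearMap.opNorm_le_bound _ (norm_nonneg (fderiv ℝ (fderiv ℝ f) x)) fun v => ?_)
    (le_of_eq ?_)
  · rw [ContinuousLinearMap.comp_apply]
    refine le_trans (le_of_eq ?_) (ContinuousLinearMap.le_opNorm _ _)
    simp
  · calc ‖fderiv ℝ (fderiv ℝ f) x‖
        = ‖iteratedFDeriv ℝ 0 (fderiv ℝ (fderiv ℝ f)) x‖ := by rw [norm_iteratedFDeriv_zero]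
      _ = ‖iteratedFDeriv ℝ 1 (fderiv ℝ f) x‖ := norm_iteratedFDeriv_fderiv
      _ = ‖iteratedFDeriv ℝ 2 f x‖ := norm_iteratedFDeriv_fderiv

open MeasureTheory Real

set_option maxHeartbeats 1000000 in
theorem statement11
    (d : ℕ) (hd : 2 ≤ d)
    (M_ω m_ω : ℝ) (hm : m_ω ≤ M_ω - 1)
    (ω : EuclideanSpace ℝ (Fin d) → ℝ)
    (hω : ContDiff ℝ 4 ω)
    (C_ω : ℝ) (hCω : 0 < C_ω)
    (hωbd : ∀ i : ℕ, i ≤ 4 → ∀ x : EuclideanSpace ℝ (Fin d),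
      ‖iteratedFDeriv ℝ i ω x‖ ≤ C_ω * (max 1 ‖x‖) ^ (M_ω - (i : ℝ)))
    (h0Sigma : ω 0 = 0)
    (hcrit0 : gradient ω 0 = 0)
    (hhess : Function.Bijective (fderiv ℝ (gradient ω) 0))
    (hnocrit : ∀ x : EuclideanSpace ℝ (Fin d), ω x = 0 → x ≠ 0 → gradient ω x ≠ 0)
    (C_g : ℝ) (hCg : 0 < C_g)
    (hg1 : ∀ x : EuclideanSpace ℝ (Fin d), ω x = 0 → x ≠ 0 → 1 ≤ ‖x‖ →
      C_g * ‖x‖ ^ m_ω ≤ ‖gradient ω x‖)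
    (hg2 : ∀ x : EuclideanSpace ℝ (Fin d), ω x = 0 → x ≠ 0 → ‖x‖ ≤ 1 →
      C_g * ‖x‖ ≤ ‖gradient ω x‖) :
    ∀ μ : EuclideanSpace ℝ (Fin d) → ℝ → ℝ,
      (∀ xξ θ, μ xξ θ = LinearMap.det
        (LinearMap.id +
          θ • ((Submodule.orthogonalProjectionOnto (Submodule.span ℝ {gradient ω xξ})ᗮ).toLinearMap ∘ₗ
            (fderiv ℝ (gradient ω) xξ).toLinearMap ∘ₗ
            (Submodule.span ℝ {gradient ω xξ})ᗮ.subtype))) →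
      (∀ xξ : EuclideanSpace ℝ (Fin d), ω xξ = 0 → xξ ≠ 0 →
        μ xξ 0 = 1 ∧
        ∃ P : Polynomial ℝ, P.natDegree ≤ d - 1 ∧ ∀ θ : ℝ, μ xξ θ = P.eval θ) ∧
      ∃ Θ₀ C : ℝ, 0 < Θ₀ ∧ 0 < C ∧ ∀ Θ : ℝ, 0 < Θ → Θ ≤ Θ₀ →
        ∀ xξ : EuclideanSpace ℝ (Fin d), ω xξ = 0 → xξ ≠ 0 →
          ∀ θ : ℝ, |θ| < Θ * (max 1 ‖xξ‖) ^ (2 - M_ω) →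
            C⁻¹ ≤ μ xξ θ ∧
            ∀ p : ℕ, p ≤ d - 1 →
              |iteratedDeriv p (μ xξ) θ| ≤
                C * (max 1 ‖xξ‖) ^ ((p : ℝ) * (M_ω - 2)) := by
  intro μ hμ
  have key : ∀ xξ : EuclideanSpace ℝ (Fin d), gradient ω xξ ≠ 0 →
      ∃ P : Polynomial ℝ, P.natDegree ≤ d - 1 ∧
        (∀ θ : ℝ, μ xξ θ = P.eval θ) ∧
        (∀ k, |P.coeff k| ≤ ((d - 1).factorial : ℝ) * 2 ^ (d - 1) *
          (C_ω * (max 1 ‖xξ‖) ^ (M_ω - 2)) ^ k) := by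
    intro xξ hN
    set Hsub := (Submodule.span ℝ {gradient ω xξ})ᗮ with hHsub
    have hnd : Module.finrank ℝ Hsub = d - 1 := by
      have h1 : Module.finrank ℝ (Submodule.span ℝ {gradient ω xξ}) = 1 :=
        finrank_span_singleton hN
      have h2 := Submodule.finrank_add_finrank_orthogonal
        (K := Submodule.span ℝ {gradient ω xξ})
      rw [h1, finrank_euclideanSpace_fin] at h2
      rw [hHsub]
      omega
    set b := stdOrthonormalBasis ℝ Hsub with hb
    set Q : Hsub →ₗ[ℝ] Hsub :=
      ((Submodule.orthogonalProjectionOnto Hsub).toLinearMap ∘ₗ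
        (fderiv ℝ (gradient ω) xξ).toLinearMap ∘ₗ Hsub.subtype) with hQ
    set Mmat := LinearMap.toMatrix b.toBasis b.toBasis Q with hM
    set K := C_ω * (max 1 ‖xξ‖) ^ (M_ω - 2) with hKdef
    have hK0 : 0 ≤ K := by positivity
    have hdet : ∀ θ : ℝ, LinearMap.det (LinearMap.id + θ • Q) = Matrix.det (1 + θ • Mmat) := by
      intro θ
      rw [← LinearMap.det_toMatrix b.toBasis, map_add, _root_.map_smul,
        LinearMap.toMatrix_id]
    have hHess : ‖fderiv ℝ (gradient ω) xξ‖ ≤ K := by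
      refine (hess_norm_le_aux ω xξ).trans ?_
      have := hωbd 2 (by omega) xξ
      rw [hKdef]
      simpa using this
    have hentry : ∀ i j, |Mmat i j| ≤ K := by
      intro i j
      have h1 : Mmat i j = (inner ℝ (b i) (Q (b j)) : ℝ) := by
        rw [hM, LinearMap.toMatrix_apply, OrthonormalBasis.coe_toBasis,
          OrthonormalBasis.coe_toBasis_repr_apply, OrthonormalBasis.repr_apply_apply]
      have hQapp : Q (b j) = Submodule.orthogonalProjectionOnto Hsub
          ((fderiv ℝ (gradient ω) xξ) ↑(b j)) := rfl
      rw [h1]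
      calc |(inner ℝ (b i) (Q (b j)) : ℝ)| ≤ ‖b i‖ * ‖Q (b j)‖ := abs_real_inner_le_norm _ _
        _ = ‖Q (b j)‖ := by rw [b.orthonormal.1 i, one_mul]
        _ ≤ ‖(fderiv ℝ (gradient ω) xξ) ↑(b j)‖ := by
            rw [hQapp]
            calc ‖Submodule.orthogonalProjectionOnto Hsub ((fderiv ℝ (gradient ω) xξ) ↑(b j))‖
                ≤ ‖Submodule.orthogonalProjectionOnto Hsub‖ * ‖(fderiv ℝ (gradient ω) xξ) ↑(b j)‖ :=
                  ContinuousLinearMap.le_opNorm _ _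
              _ ≤ 1 * ‖(fderiv ℝ (gradient ω) xξ) ↑(b j)‖ :=
                  mul_le_mul_of_nonneg_right (Submodule.orthogonalProjectionOnto_norm_le _) (norm_nonneg _)
              _ = ‖(fderiv ℝ (gradient ω) xξ) ↑(b j)‖ := one_mul _
        _ ≤ ‖fderiv ℝ (gradient ω) xξ‖ * ‖(↑(b j) : EuclideanSpace ℝ (Fin d))‖ :=
            ContinuousLinearMap.le_opNorm _ _
        _ = ‖fderiv ℝ (gradient ω) xξ‖ := by
            rw [Submodule.norm_coe, b.orthonormal.1 j, mul_one]
        _ ≤ K := hHess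
    obtain ⟨P, hP1, hP2, hP3⟩ := det_one_add_smul_poly Mmat K hK0 hentry
    rw [hnd] at hP1 hP3
    refine ⟨P, hP1, ?_, hP3⟩
    intro θ
    rw [hμ, hdet θ, hP2 θ]
  constructor
  · intro xξ h1 h2
    obtain ⟨P, hPdeg, hPeval, _⟩ := key xξ (hnocrit xξ h1 h2)
    have hμ0 : μ xξ 0 = 1 := by
      rw [hμ, zero_smul, add_zero, LinearMap.det_id]
    exact ⟨hμ0, P, hPdeg, hPeval⟩
  · set A := ((d - 1).factorial : ℝ) * 2 ^ (d - 1) with hA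
    have hA0 : 0 < A := by positivity
    set D := (((2 * (d - 1) + 1) ^ (2 * (d - 1) + 1) : ℕ) : ℝ) * ((d - 1 : ℕ) + 1) * A with hD
    have hD0 : 0 < D := by positivity
    refine ⟨(C_ω * (1 + 2 * A * d))⁻¹, max 2 (D * (max 1 C_ω) ^ (d - 1)), by positivity,
      by positivity, ?_⟩
    intro Θ hΘ0 hΘ1 xξ h1 h2 θ hθ
    obtain ⟨P, hPdeg, hPeval, hPcoeff⟩ := key xξ (hnocrit xξ h1 h2)
    have hx1 : (1 : ℝ) ≤ max 1 ‖xξ‖ := le_max_left _ _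
    have hx0 : (0 : ℝ) < max 1 ‖xξ‖ := lt_of_lt_of_le one_pos hx1
    set K := C_ω * (max 1 ‖xξ‖) ^ (M_ω - 2) with hKdef
    have hK0 : 0 ≤ K := by positivity
    have ht0 : (0 : ℝ) < 1 + 2 * A * d := by positivity
    have hθK : |θ| * K ≤ (1 + 2 * A * d)⁻¹ := by
      have hcancel : (max 1 ‖xξ‖) ^ (2 - M_ω) * (max 1 ‖xξ‖) ^ (M_ω - 2) = 1 := by
        rw [← Real.rpow_add hx0]; norm_num
      have step1 : |θ| * K ≤ (Θ * (max 1 ‖xξ‖) ^ (2 - M_ω)) * K :=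
        mul_le_mul_of_nonneg_right (le_of_lt hθ) hK0
      have step2 : (Θ * (max 1 ‖xξ‖) ^ (2 - M_ω)) * K = Θ * C_ω := by
        rw [hKdef]
        calc (Θ * (max 1 ‖xξ‖) ^ (2 - M_ω)) * (C_ω * (max 1 ‖xξ‖) ^ (M_ω - 2))
            = Θ * C_ω * ((max 1 ‖xξ‖) ^ (2 - M_ω) * (max 1 ‖xξ‖) ^ (M_ω - 2)) := by ring
          _ = Θ * C_ω := by rw [hcancel, mul_one]
      have step3 : Θ * C_ω ≤ (1 + 2 * A * d)⁻¹ := by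
        have := mul_le_mul_of_nonneg_right hΘ1 (le_of_lt hCω)
        calc Θ * C_ω ≤ (C_ω * (1 + 2 * A * d))⁻¹ * C_ω := this
          _ = (1 + 2 * A * d)⁻¹ := by
              field_simp
      calc |θ| * K ≤ (Θ * (max 1 ‖xξ‖) ^ (2 - M_ω)) * K := step1
        _ = Θ * C_ω := step2
        _ ≤ (1 + 2 * A * d)⁻¹ := step3
    have hθK1 : |θ| * K ≤ 1 := le_trans hθK (by
      rw [inv_le_one_iff₀]; right
      have hAd : 0 ≤ A * d := by positivity
      linarith)
    constructor
    · -- lower bound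
      have hc0 : P.coeff 0 = 1 := by
        rw [Polynomial.coeff_zero_eq_eval_zero, ← hPeval 0, hμ, zero_smul, add_zero,
          LinearMap.det_id]
      have hsub := poly_eval_sub_coeff_zero (d - 1) P hPdeg A K (le_of_lt hA0) hK0
        hPcoeff θ hθK1
      rw [hc0] at hsub
      have hhalf : A * ((d - 1 : ℕ) : ℝ) * (|θ| * K) ≤ 1 / 2 := by
        have h1 : A * ((d - 1 : ℕ) : ℝ) * (|θ| * K) ≤ A * d * (1 + 2 * A * d)⁻¹ := by
          have hd1 : (((d : ℕ) - 1 : ℕ) : ℝ) ≤ (d : ℝ) := by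
            exact_mod_cast Nat.sub_le d 1
          have := mul_le_mul (mul_le_mul_of_nonneg_left hd1 (le_of_lt hA0)) hθK
            (mul_nonneg (abs_nonneg _) hK0) (by positivity)
          linarith
        have h2 : A * d * (1 + 2 * A * d)⁻¹ ≤ 1 / 2 := by
          rw [div_eq_mul_inv, mul_comm (1:ℝ)]
          rw [mul_inv_le_iff₀ ht0]
          nlinarith [mul_pos hA0 (show (0:ℝ) < d by exact_mod_cast (by omega : 0 < d))]
        linarith
      have hmul : μ xξ θ ≥ 1 / 2 := by
        rw [hPeval θ]
        have := abs_le.mp hsub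
        linarith
      have hinv : (max 2 (D * (max 1 C_ω) ^ (d - 1)))⁻¹ ≤ 1 / 2 := by
        rw [inv_le_iff_one_le_mul₀ (by positivity)]
        have : (2 : ℝ) ≤ max 2 (D * (max 1 C_ω) ^ (d - 1)) := le_max_left _ _
        linarith
      linarith
    · -- derivative bounds
      intro p hp
      have hfun : μ xξ = fun t => P.eval t := funext hPeval
      rw [hfun]
      have hder := poly_deriv_bound (d - 1) P hPdeg A K (le_of_lt hA0) hK0 hPcoeff p hp θ hθK1
      refine hder.trans ?_
      have hKp : K ^ p = C_ω ^ p * (max 1 ‖xξ‖) ^ ((p : ℝ) * (M_ω - 2)) := by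
        rw [hKdef, mul_pow]
        congr 1
        rw [← Real.rpow_natCast ((max 1 ‖xξ‖) ^ (M_ω - 2)) p, ← Real.rpow_mul (le_of_lt hx0),
          mul_comm]
      rw [hKp]
      have hCp : C_ω ^ p ≤ (max 1 C_ω) ^ (d - 1) := by
        calc C_ω ^ p ≤ (max 1 C_ω) ^ p :=
              pow_le_pow_left₀ (le_of_lt hCω) (le_max_right _ _) p
          _ ≤ (max 1 C_ω) ^ (d - 1) := pow_le_pow_right₀ (le_max_left _ _) hp
      have hrp : (0 : ℝ) ≤ (max 1 ‖xξ‖) ^ ((p : ℝ) * (M_ω - 2)) := by positivity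
      calc (((2 * (d - 1) + 1) ^ (2 * (d - 1) + 1) : ℕ) : ℝ) * ((d - 1 : ℕ) + 1) * A *
            (C_ω ^ p * (max 1 ‖xξ‖) ^ ((p : ℝ) * (M_ω - 2)))
          = (D * C_ω ^ p) * (max 1 ‖xξ‖) ^ ((p : ℝ) * (M_ω - 2)) := by rw [hD]; ring
        _ ≤ (D * (max 1 C_ω) ^ (d - 1)) * (max 1 ‖xξ‖) ^ ((p : ℝ) * (M_ω - 2)) := by
            refine mul_le_mul_of_nonneg_right ?_ hrp
            exact mul_le_mul_of_nonneg_left hCp (le_of_lt hD0)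
        _ ≤ max 2 (D * (max 1 C_ω) ^ (d - 1)) * (max 1 ‖xξ‖) ^ ((p : ℝ) * (M_ω - 2)) :=
            mul_le_mul_of_nonneg_right (le_max_right _ _) hrp
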